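/- Let X be a random vector in [0,1]^p with density bounded above and below by strictly positive constants, and let m be continuous. Let X_{π_j} denote X with its j-th component replaced by an independent copy of X^{(j)}. Then the marginal total Sobol index ST_mg^{(j)} = E[Var(m(X_{π_j}) | X^{(-j)})]/Var(Y) is zero if and only if the total Sobol index ST^{(j)} = E[Var(m(X) | X^{(-j)})]/Var(Y) is zero. -/

import Mathlib

open MeasureTheory ProbabilityTheory
open scoped ENNReal NNReal

noncomputable section

/-- The σ-algebra generated by the components of `X` other than the `j`-th,
    i.e. the σ-algebra of `X^{(-j)}`. -/
def sigmaWithout {Ω : Type*} [MeasurableSpace Ω] {p : ℕ} (X : Ω → Fin p → ℝ) (j : Fin p) :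
    MeasurableSpace Ω :=
  MeasurableSpace.comap (fun ω => fun k : {k : Fin p // k ≠ j} => X ω (k : Fin p)) inferInstance

/-- `X_{π_j}` : the vector `X` with its `j`-th component replaced by `X'`. -/
def permuted {Ω : Type*} {p : ℕ} (X : Ω → Fin p → ℝ) (j : Fin p) (X' : Ω → ℝ) :
    Ω → Fin p → ℝ :=
  fun ω => Function.update (X ω) j (X' ω)

/-- If `c1 • ν ≤ μ ≤ c2 • ν` with `c1 ≠ 0`, then `μ` and `ν` have the same null sets. -/
lemma aux_null_iff_null_of_sandwich {α : Type*} [MeasurableSpace α] {μ ν : Measure α}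
    {c1 c2 : ℝ≥0∞} (hc1 : c1 ≠ 0) (h1 : c1 • ν ≤ μ) (h2 : μ ≤ c2 • ν) (s : Set α) :
    μ s = 0 ↔ ν s = 0 := by
  constructor
  · intro h
    have hle := Measure.le_iff'.1 h1 s
    rw [Measure.smul_apply, smul_eq_mul] at hle
    have h0 : c1 * ν s = 0 := le_antisymm (hle.trans_eq h) (zero_le)
    simpa [hc1] using h0
  · intro h
    have hle := Measure.le_iff'.1 h2 s
    rw [Measure.smul_apply, smul_eq_mul, h, mul_zero] at hle
    exact le_antisymm hle (zero_le)

/-- Null sets of a product of sandwiched measures agree with those of the base product. -/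
lemma aux_prod_null_iff_of_sandwich {α β : Type*} [MeasurableSpace α] [MeasurableSpace β]
    {μ1 ρ1 : Measure α} {μ2 ρ2 : Measure β} [SigmaFinite μ2] [SigmaFinite ρ2]
    {c1 c2 : ℝ≥0∞} (hc1 : c1 ≠ 0)
    (h1a : c1 • ρ1 ≤ μ1) (h1b : μ1 ≤ c2 • ρ1) (h2a : c1 • ρ2 ≤ μ2) (h2b : μ2 ≤ c2 • ρ2)
    {S : Set (α × β)} (hS : MeasurableSet S) :
    (μ1.prod μ2) S = 0 ↔ (ρ1.prod ρ2) S = 0 := by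
  have hmeasρ : Measurable fun x => ρ2 (Prod.mk x ⁻¹' S) := measurable_measure_prodMk_left hS
  have hmeasμ : Measurable fun x => μ2 (Prod.mk x ⁻¹' S) := measurable_measure_prodMk_left hS
  constructor
  · intro h
    have key : c1 * c1 * (ρ1.prod ρ2) S ≤ (μ1.prod μ2) S := by
      rw [Measure.prod_apply hS, Measure.prod_apply hS, mul_assoc,
        ← lintegral_const_mul c1 hmeasρ, ← smul_eq_mul (a := c1), ← lintegral_smul_measure]
      refine lintegral_mono' h1a fun x => ?_
      simpa [smul_eq_mul] using Measure.le_iff'.1 h2a (Prod.mk x ⁻¹' S)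
    rw [h] at key
    have h0 : c1 * c1 * (ρ1.prod ρ2) S = 0 := le_antisymm key (zero_le)
    simpa [hc1] using h0
  · intro h
    have key : (μ1.prod μ2) S ≤ c2 * c2 * (ρ1.prod ρ2) S := by
      rw [Measure.prod_apply hS, Measure.prod_apply hS, mul_assoc,
        ← lintegral_const_mul c2 hmeasρ, ← smul_eq_mul (a := c2), ← lintegral_smul_measure]
      refine lintegral_mono' h1b fun x => ?_
      simpa [smul_eq_mul] using Measure.le_iff'.1 h2b (Prod.mk x ⁻¹' S)
    rw [h, mul_zero] at key
    exact le_antisymm key (zero_le)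

/-- The marginal total Sobol index `ST_mg^{(j)}` vanishes iff the total Sobol index
`ST^{(j)}` vanishes. -/
theorem marginal_total_sobol_zero_iff
    {Ω : Type*} [MeasureSpace Ω] [IsProbabilityMeasure (ℙ : Measure Ω)]
    {p : ℕ} (j : Fin p) (X : Ω → Fin p → ℝ) (X' : Ω → ℝ) (ε : Ω → ℝ)
    (m : (Fin p → ℝ) → ℝ) (hm : Continuous m)
    (hX : Measurable X) (hX' : Measurable X') (hε : Measurable ε)
    (fX : (Fin p → ℝ) → ℝ≥0∞) (hfX : Measurable fX) (c1 c2 : ℝ≥0∞)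
    (hc1 : 0 < c1) (hc2 : c2 < ⊤)
    -- `X` has density `fX`, supported on the unit cube and bounded above and below there
    (hmap : Measure.map X ℙ = (volume.restrict (Set.Icc (0 : Fin p → ℝ) 1)).withDensity fX)
    (hbound : ∀ x ∈ Set.Icc (0 : Fin p → ℝ) 1, c1 ≤ fX x ∧ fX x ≤ c2)
    -- `X'` is an independent copy of the `j`-th component of `X`
    (hcopy : Measure.map X' ℙ = Measure.map (fun ω => X ω j) ℙ)
    (hindep : IndepFun X' X ℙ)
    -- `Y = m(X) + ε` with `ε` centered and independent of `X`, and `Var(Y) > 0`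
    (hεindep : IndepFun ε X ℙ) (hεint : Integrable ε ℙ) (hεmean : ∫ ω, ε ω ∂ℙ = 0)
    (hVarY : 0 < variance (fun ω => m (X ω) + ε ω) ℙ) :
    (∫ ω, (m (permuted X j X' ω)
        - (ℙ[fun ω' => m (permuted X j X' ω') | sigmaWithout X j]) ω) ^ 2 ∂ℙ)
          / variance (fun ω => m (X ω) + ε ω) ℙ = 0 ↔
    (∫ ω, (m (X ω) - (ℙ[fun ω' => m (X ω') | sigmaWithout X j]) ω) ^ 2 ∂ℙ)
          / variance (fun ω => m (X ω) + ε ω) ℙ = 0 := by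
  have hVar0 : variance (fun ω => m (X ω) + ε ω) ℙ ≠ 0 := ne_of_gt hVarY
  rw [div_eq_zero_iff, div_eq_zero_iff]
  simp only [hVar0, or_false]
  -- Notation
  set cube : Set (Fin p → ℝ) := Set.Icc 0 1 with hcube_def
  have hcubeM : MeasurableSet cube := measurableSet_Icc
  set W : Ω → ({k : Fin p // k ≠ j} → ℝ) := fun ω => fun k : {k : Fin p // k ≠ j} => X ω (k : Fin p)
    with hW_def
  have hW : Measurable W :=
    measurable_pi_lambda _ fun k => (measurable_pi_apply (k : Fin p)).comp hX
  have hG_le : sigmaWithout X j ≤ (inferInstance : MeasurableSpace Ω) := hW.comap_le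
  have hXj : Measurable fun ω => X ω j := (measurable_pi_apply j).comp hX
  -- a.e. membership facts
  have hXcube : ∀ᵐ ω ∂ℙ, X ω ∈ cube := by
    rw [ae_iff]
    have hset : {ω | ¬ X ω ∈ cube} = X ⁻¹' cubeᶜ := rfl
    rw [hset, ← Measure.map_apply hX hcubeM.compl, hmap]
    refine (withDensity_absolutelyContinuous _ _) ?_
    rw [Measure.restrict_apply hcubeM.compl]
    simp
  have hX'mem : ∀ᵐ ω ∂ℙ, X' ω ∈ Set.Icc (0:ℝ) 1 := by
    rw [ae_iff]
    have hset : {ω | ¬ X' ω ∈ Set.Icc (0:ℝ) 1} = X' ⁻¹' (Set.Icc (0:ℝ) 1)ᶜ := rfl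
    rw [hset, ← Measure.map_apply hX' measurableSet_Icc.compl, hcopy,
      Measure.map_apply hXj measurableSet_Icc.compl]
    have h0 : ∀ᵐ ω ∂ℙ, X ω j ∈ Set.Icc (0:ℝ) 1 := by
      filter_upwards [hXcube] with ω h
      exact ⟨h.1 j, h.2 j⟩
    rw [ae_iff] at h0
    exact h0
  have hpermcube : ∀ᵐ ω ∂ℙ, permuted X j X' ω ∈ cube := by
    filter_upwards [hXcube, hX'mem] with ω h1 h2
    simp only [hcube_def, Set.mem_Icc, Pi.le_def, Pi.zero_apply, Pi.one_apply] at h1 ⊢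
    refine ⟨fun k => ?_, fun k => ?_⟩ <;> rcases eq_or_ne k j with hk | hk <;>
      simp [permuted, Function.update_apply, hk, h2.1, h2.2, h1.1 k, h1.2 k]
  -- bound on m over the cube
  obtain ⟨C, hC⟩ : ∃ C, ∀ x ∈ cube, ‖m x‖ ≤ C :=
    (isCompact_Icc).exists_bound_of_continuousOn hm.continuousOn
  set R : ℝ≥0 := ⟨max C 0, le_max_right _ _⟩ with hR_def
  have hbm : ∀ x ∈ cube, |m x| ≤ (R : ℝ) := fun x hx => by
    have := hC x hx
    rw [Real.norm_eq_abs] at this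
    exact this.trans (le_max_left _ _)
  -- the reconstruction map
  set recon : ℝ × ({k : Fin p // k ≠ j} → ℝ) → (Fin p → ℝ) :=
    fun q k => if h : k = j then q.1 else q.2 ⟨k, h⟩ with hrecon_def
  have hrecon : Measurable recon := by
    refine measurable_pi_lambda _ fun k => ?_
    by_cases hk : k = j
    · simpa [hrecon_def, hk] using measurable_fst
    · simpa [hrecon_def, hk, Function.comp_def] using (measurable_pi_apply (⟨k, hk⟩ : {k : Fin p // k ≠ j})).comp
        measurable_snd
  have hreconX : ∀ ω, recon (X ω j, W ω) = X ω := by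
    intro ω; funext k
    by_cases hk : k = j
    · subst hk; simp [hrecon_def]
    · simp [hrecon_def, hk, hW_def]
  have hreconP : ∀ ω, recon (X' ω, W ω) = permuted X j X' ω := by
    intro ω; funext k
    by_cases hk : k = j
    · subst hk; simp [hrecon_def, permuted]
    · simp [hrecon_def, permuted, Function.update_apply, hk, hW_def]
  set m' : ℝ × ({k : Fin p // k ≠ j} → ℝ) → ℝ := fun q => m (recon q) with hm'_def
  have hm'meas : Measurable m' := hm.measurable.comp hrecon
  -- the splitting measurable equivalence
  set e1 := MeasurableEquiv.piEquivPiSubtypeProd (fun _ : Fin p => ℝ) (fun k => k = j) with he1_def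
  set e2 := MeasurableEquiv.prodCongr (MeasurableEquiv.funUnique {k : Fin p // k = j} ℝ)
    (MeasurableEquiv.refl ({k : Fin p // ¬ k = j} → ℝ)) with he2_def
  set EF : (Fin p → ℝ) ≃ᵐ ℝ × ({k : Fin p // k ≠ j} → ℝ) := e1.trans e2 with hEF_def
  have hEFapp : ∀ x : Fin p → ℝ, EF x = (x j, fun k : {k : Fin p // k ≠ j} => x (k : Fin p)) := by
    intro x
    refine Prod.ext ?_ rfl
    exact congrArg x (Subtype.prop (default : {k : Fin p // k = j}))
  have hEFvol : MeasurePreserving (⇑EF) volume volume := by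
    have h1 := MeasureTheory.volume_preserving_piEquivPiSubtypeProd
      (fun _ : Fin p => ℝ) (fun k => k = j)
    have h2 := (measurePreserving_funUnique (volume : Measure ℝ) {k : Fin p // k = j}).prod
      (MeasurePreserving.id (volume : Measure ({k : Fin p // ¬ k = j} → ℝ)))
    refine MeasurePreserving.comp (g := ⇑e2) ?_ h1
    refine ⟨e2.measurable, ?_⟩
    have hstep : ∀ (F : Fintype {k : Fin p // k = j}),
        Measure.map (⇑e2) ((@Measure.pi {k : Fin p // k = j} (fun _ => ℝ) F (fun _ => inferInstance)
            (fun _ => volume)).prod (volume : Measure ({k : Fin p // ¬ k = j} → ℝ)))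
          = volume := by
      intro F
      have hFe : @Measure.pi {k : Fin p // k = j} (fun _ => ℝ) F (fun _ => inferInstance)
            (fun _ => volume)
          = @Measure.pi {k : Fin p // k = j} (fun _ => ℝ) Unique.fintype
            (fun _ => inferInstance) (fun _ => volume) := by
        congr 1
        exact Subsingleton.elim _ _
      rw [hFe]
      exact h2.map_eq
    exact hstep _
  set I : Set ℝ := Set.Icc 0 1 with hI_def
  set C2 : Set ({k : Fin p // k ≠ j} → ℝ) := Set.Icc 0 1 with hC2_def
  set lI : Measure ℝ := volume.restrict I with hlI_def
  set lC : Measure ({k : Fin p // k ≠ j} → ℝ) := volume.restrict C2 with hlC_def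
  haveI hIprob : IsProbabilityMeasure lI := by
    constructor
    rw [hlI_def, Measure.restrict_apply_univ, hI_def, Real.volume_Icc]
    simp
  haveI hCprob : IsProbabilityMeasure lC := by
    constructor
    rw [hlC_def, Measure.restrict_apply_univ, hC2_def, ← Set.pi_univ_Icc, volume_pi_pi]
    simp [Real.volume_Icc]
  have hcube_preim : cube = EF ⁻¹' (I ×ˢ C2) := by
    ext x
    simp only [Set.mem_preimage, hEFapp, Set.mem_prod, hcube_def, hI_def, hC2_def, Set.mem_Icc,
      Pi.le_def]
    constructor
    · rintro ⟨h0, h1⟩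
      exact ⟨⟨h0 j, h1 j⟩, fun k => h0 (k : Fin p), fun k => h1 (k : Fin p)⟩
    · rintro ⟨⟨hj0, hj1⟩, h0, h1⟩
      refine ⟨fun k => ?_, fun k => ?_⟩ <;> by_cases hk : k = j
      · subst hk; exact hj0
      · exact h0 ⟨k, hk⟩
      · subst hk; exact hj1
      · exact h1 ⟨k, hk⟩
  set ρ : Measure (ℝ × ({k : Fin p // k ≠ j} → ℝ)) := lI.prod lC with hρ_def
  have hρmap : Measure.map (⇑EF) (volume.restrict cube) = ρ := by
    rw [hcube_preim, ← Measure.restrict_map EF.measurable (measurableSet_Icc.prod measurableSet_Icc),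
      hEFvol.map_eq, hρ_def, hlI_def, hlC_def, Measure.prod_restrict]
    rfl
  -- bounds on the law of X
  set μX : Measure (Fin p → ℝ) := Measure.map X ℙ with hμX_def
  have hlow : c1 • (volume.restrict cube) ≤ μX := by
    rw [hmap, ← withDensity_const]
    exact withDensity_mono ((ae_restrict_mem hcubeM).mono fun x hx => (hbound x hx).1)
  have hup : μX ≤ c2 • (volume.restrict cube) := by
    rw [hmap, ← withDensity_const]
    exact withDensity_mono ((ae_restrict_mem hcubeM).mono fun x hx => (hbound x hx).2)
  -- the law of (X j, W)
  set Z : Ω → ℝ × ({k : Fin p // k ≠ j} → ℝ) := fun ω => (X ω j, W ω) with hZ_def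
  have hZ : Measurable Z := hXj.prodMk hW
  have hZEF : Z = ⇑EF ∘ X := by
    funext ω; exact (hEFapp (X ω)).symm
  set ν : Measure (ℝ × ({k : Fin p // k ≠ j} → ℝ)) := Measure.map Z ℙ with hν_def
  have hνEF : ν = Measure.map (⇑EF) μX := by
    rw [hν_def, hμX_def, hZEF]
    exact (Measure.map_map EF.measurable hX).symm
  have hνlow : c1 • ρ ≤ ν := by
    rw [hνEF, ← hρmap, ← Measure.map_smul]
    exact Measure.map_mono hlow EF.measurable
  have hνup : ν ≤ c2 • ρ := by
    rw [hνEF, ← hρmap, ← Measure.map_smul]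
    exact Measure.map_mono hup EF.measurable
  -- the marginals
  set ν1 : Measure ℝ := Measure.map (fun ω => X ω j) ℙ with hν1_def
  set ν2 : Measure ({k : Fin p // k ≠ j} → ℝ) := Measure.map W ℙ with hν2_def
  haveI : IsProbabilityMeasure ν1 := Measure.isProbabilityMeasure_map hXj.aemeasurable
  haveI : IsProbabilityMeasure ν2 := Measure.isProbabilityMeasure_map hW.aemeasurable
  have hν1 : ν1 = Measure.map Prod.fst ν := by
    rw [hν_def, hν1_def, Measure.map_map measurable_fst hZ]; rfl
  have hν2 : ν2 = Measure.map Prod.snd ν := by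
    rw [hν_def, hν2_def, Measure.map_map measurable_snd hZ]; rfl
  have hν1low : c1 • lI ≤ ν1 := by
    rw [hν1]
    have : c1 • lI = Measure.map Prod.fst (c1 • ρ) := by
      rw [Measure.map_smul, hρ_def, Measure.map_fst_prod, measure_univ, one_smul]
    rw [this]
    exact Measure.map_mono hνlow measurable_fst
  have hν1up : ν1 ≤ c2 • lI := by
    rw [hν1]
    have : c2 • lI = Measure.map Prod.fst (c2 • ρ) := by
      rw [Measure.map_smul, hρ_def, Measure.map_fst_prod, measure_univ, one_smul]
    rw [this]
    exact Measure.map_mono hνup measurable_fst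
  have hν2low : c1 • lC ≤ ν2 := by
    rw [hν2]
    have : c1 • lC = Measure.map Prod.snd (c1 • ρ) := by
      rw [Measure.map_smul, hρ_def, Measure.map_snd_prod, measure_univ, one_smul]
    rw [this]
    exact Measure.map_mono hνlow measurable_snd
  have hν2up : ν2 ≤ c2 • lC := by
    rw [hν2]
    have : c2 • lC = Measure.map Prod.snd (c2 • ρ) := by
      rw [Measure.map_smul, hρ_def, Measure.map_snd_prod, measure_univ, one_smul]
    rw [this]
    exact Measure.map_mono hνup measurable_snd
  -- independence: the law of (X', W) is the product of the marginals
  have hWX : IndepFun X' W ℙ := by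
    have := hindep.comp measurable_id
      (measurable_pi_lambda (fun (x : Fin p → ℝ) (k : {k : Fin p // k ≠ j}) => x (k : Fin p))
        fun k => measurable_pi_apply (k : Fin p))
    exact this
  have hprodlaw : Measure.map (fun ω => (X' ω, W ω)) ℙ = ν1.prod ν2 := by
    rw [(indepFun_iff_map_prod_eq_prod_map_map hX'.aemeasurable hW.aemeasurable).mp hWX,
      hcopy, ← hν2_def]
  -- transfer of "being a.e. a function of W" between X and the permuted vector
  have transfer : ∀ h : ({k : Fin p // k ≠ j} → ℝ) → ℝ, Measurable h →
      (((fun ω => m (X ω)) =ᵐ[ℙ] fun ω => h (W ω)) ↔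
        ((fun ω => m (permuted X j X' ω)) =ᵐ[ℙ] fun ω => h (W ω))) := by
    intro h hh
    set S : Set (ℝ × ({k : Fin p // k ≠ j} → ℝ)) := {q | ¬ m' q = h q.2} with hS_def
    have hSmeas : MeasurableSet S :=
      (measurableSet_eq_fun hm'meas (hh.comp measurable_snd)).compl
    have he1 : ((fun ω => m (X ω)) =ᵐ[ℙ] fun ω => h (W ω)) ↔ ν S = 0 := by
      rw [Filter.EventuallyEq, ae_iff, hν_def, Measure.map_apply hZ hSmeas]
      have hset : {ω | ¬ m (X ω) = h (W ω)} = Z ⁻¹' S := by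
        ext ω
        simp only [Set.mem_setOf_eq, Set.mem_preimage, hS_def, hZ_def, hm'_def, hreconX ω]
      rw [hset]
    have he2 : ((fun ω => m (permuted X j X' ω)) =ᵐ[ℙ] fun ω => h (W ω)) ↔
        (ν1.prod ν2) S = 0 := by
      rw [Filter.EventuallyEq, ae_iff, ← hprodlaw, Measure.map_apply (hX'.prodMk hW) hSmeas]
      have hset : {ω | ¬ m (permuted X j X' ω) = h (W ω)} =
          (fun ω => (X' ω, W ω)) ⁻¹' S := by
        ext ω
        simp only [Set.mem_setOf_eq, Set.mem_preimage, hS_def, hm'_def, hreconP ω]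
      rw [hset]
    rw [he1, he2,
      aux_null_iff_null_of_sandwich hc1.ne' hνlow hνup S,
      ← aux_prod_null_iff_of_sandwich hc1.ne' hν1low hν1up hν2low hν2up hSmeas]
  -- integrability helper
  have int_of_bdd : ∀ (u : Ω → ℝ) (Cb : ℝ), AEStronglyMeasurable u ℙ →
      (∀ᵐ ω ∂ℙ, |u ω| ≤ Cb) → Integrable u ℙ := fun u Cb hu hb =>
    memLp_one_iff_integrable.mp (MemLp.of_bound hu Cb (by simpa [Real.norm_eq_abs] using hb))
  -- the two functions
  set f1 : Ω → ℝ := fun ω => m (X ω) with hf1_def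
  set f2 : Ω → ℝ := fun ω => m (permuted X j X' ω) with hf2_def
  have hf1 : Measurable f1 := hm.measurable.comp hX
  have hpm : Measurable (permuted X j X') := by
    have : permuted X j X' = fun ω => recon (X' ω, W ω) := funext fun ω => (hreconP ω).symm
    rw [this]
    exact hrecon.comp (hX'.prodMk hW)
  have hf2 : Measurable f2 := hm.measurable.comp hpm
  have hb1 : ∀ᵐ ω ∂ℙ, |f1 ω| ≤ (R : ℝ) := hXcube.mono fun ω h => hbm _ h
  have hb2 : ∀ᵐ ω ∂ℙ, |f2 ω| ≤ (R : ℝ) := hpermcube.mono fun ω h => hbm _ h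
  have hint1 : Integrable f1 ℙ := int_of_bdd f1 R hf1.aestronglyMeasurable hb1
  have hint2 : Integrable f2 ℙ := int_of_bdd f2 R hf2.aestronglyMeasurable hb2
  -- the square-integral criterion
  have haveN : ∀ (f : Ω → ℝ), Measurable f → (∀ᵐ ω ∂ℙ, |f ω| ≤ (R : ℝ)) →
      ((∫ ω, (f ω - (ℙ[f|sigmaWithout X j]) ω) ^ 2 ∂ℙ) = 0 ↔
        f =ᵐ[ℙ] ℙ[f|sigmaWithout X j]) := by
    intro f hf hb
    set g := ℙ[f|sigmaWithout X j] with hg_def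
    have hgb : ∀ᵐ ω ∂ℙ, |g ω| ≤ (R : ℝ) := ae_bdd_condExp_of_ae_bdd hb
    have hgm : Measurable g := (stronglyMeasurable_condExp.mono hG_le).measurable
    have hint : Integrable (fun ω => (f ω - g ω) ^ 2) ℙ := by
      refine int_of_bdd _ ((2 * (R : ℝ)) ^ 2) ((hf.sub hgm).pow_const 2).aestronglyMeasurable ?_
      filter_upwards [hb, hgb] with ω h1 h2
      have habs : |f ω - g ω| ≤ 2 * (R : ℝ) := by
        calc |f ω - g ω| ≤ |f ω| + |g ω| := abs_sub _ _
        _ ≤ (R : ℝ) + (R : ℝ) := add_le_add h1 h2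
        _ = 2 * (R : ℝ) := by ring
      calc |(f ω - g ω) ^ 2| = |f ω - g ω| ^ 2 := abs_pow _ _
      _ ≤ (2 * (R : ℝ)) ^ 2 := pow_le_pow_left₀ (abs_nonneg _) habs 2
    rw [integral_eq_zero_iff_of_nonneg (fun ω => sq_nonneg _) hint]
    constructor
    · intro hz
      filter_upwards [hz] with ω hω
      have hω' : (f ω - g ω) ^ 2 = 0 := hω
      exact sub_eq_zero.mp (pow_eq_zero_iff two_ne_zero |>.mp hω')
    · intro hz
      filter_upwards [hz] with ω hω
      simp [hω]
  -- factorization of conditional expectations through W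
  have factor : ∀ (Y : Ω → ℝ), Measurable Y →
      Integrable (fun ω => m (recon (Y ω, W ω))) ℙ →
      ∃ h : ({k : Fin p // k ≠ j} → ℝ) → ℝ, Measurable h ∧
        (ℙ[fun ω => m (recon (Y ω, W ω))|sigmaWithout X j]) =ᵐ[ℙ] fun ω => h (W ω) := by
    intro Y hY hintY
    have hmf : StronglyMeasurable
        (fun q : ({k : Fin p // k ≠ j} → ℝ) × ℝ => m' (q.2, q.1)) :=
      (hm'meas.comp (measurable_snd.prodMk measurable_fst)).stronglyMeasurable
    have hce := condExp_prod_ae_eq_integral_condDistrib (μ := ℙ) (X := W) (Y := Y)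
      hW hY.aemeasurable hmf hintY
    set h0 : ({k : Fin p // k ≠ j} → ℝ) → ℝ :=
      fun w => ∫ y, m' (y, w) ∂(condDistrib Y W ℙ) w with hh0_def
    have hh0 : AEStronglyMeasurable h0 (Measure.map W ℙ) :=
      MeasureTheory.AEStronglyMeasurable.integral_condDistrib_map hY.aemeasurable
        hmf.aestronglyMeasurable
    refine ⟨hh0.mk h0, hh0.stronglyMeasurable_mk.measurable, ?_⟩
    have hWk : (fun ω => h0 (W ω)) =ᵐ[ℙ] fun ω => hh0.mk h0 (W ω) :=
      ae_eq_comp hW.aemeasurable hh0.ae_eq_mk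
    exact hce.trans hWk
  -- conclude
  have main : ∀ (f : Ω → ℝ), Measurable f → (∀ᵐ ω ∂ℙ, |f ω| ≤ (R : ℝ)) →
      ∀ h : ({k : Fin p // k ≠ j} → ℝ) → ℝ, Measurable h → f =ᵐ[ℙ] (fun ω => h (W ω)) →
      f =ᵐ[ℙ] ℙ[f|sigmaWithout X j] := by
    intro f hf hb h hh hfac
    have hGmeas : Measurable[sigmaWithout X j] (fun ω => h (W ω)) :=
      hh.comp (Measurable.of_comap_le le_rfl)
    have hWint : Integrable (fun ω => h (W ω)) ℙ :=
      (int_of_bdd f R hf.aestronglyMeasurable hb).congr hfac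
    have hcond : ℙ[f|sigmaWithout X j] =ᵐ[ℙ] fun ω => h (W ω) := by
      refine (condExp_congr_ae hfac).trans ?_
      rw [condExp_of_stronglyMeasurable hG_le hGmeas.stronglyMeasurable hWint]
    exact hfac.trans hcond.symm
  constructor
  · intro hzero
    have h2 : f2 =ᵐ[ℙ] ℙ[f2|sigmaWithout X j] := (haveN f2 hf2 hb2).mp hzero
    have hq2 : (fun ω => m (recon (X' ω, W ω))) = f2 :=
      funext fun ω => congrArg m (hreconP ω)
    obtain ⟨h, hh, hfac⟩ := factor X' hX' (hq2 ▸ hint2)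
    rw [hq2] at hfac
    have hf2h : f2 =ᵐ[ℙ] fun ω => h (W ω) := h2.trans hfac
    have hf1h : f1 =ᵐ[ℙ] fun ω => h (W ω) := (transfer h hh).mpr hf2h
    exact (haveN f1 hf1 hb1).mpr (main f1 hf1 hb1 h hh hf1h)
  · intro hzero
    have h1 : f1 =ᵐ[ℙ] ℙ[f1|sigmaWithout X j] := (haveN f1 hf1 hb1).mp hzero
    have hq1 : (fun ω => m (recon (X ω j, W ω))) = f1 :=
      funext fun ω => congrArg m (hreconX ω)
    obtain ⟨h, hh, hfac⟩ := factor (fun ω => X ω j) hXj (hq1 ▸ hint1)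
    rw [hq1] at hfac
    have hf1h : f1 =ᵐ[ℙ] fun ω => h (W ω) := h1.trans hfac
    have hf2h : f2 =ᵐ[ℙ] fun ω => h (W ω) := (transfer h hh).mp hf1h
    exact (haveN f2 hf2 hb2).mpr (main f2 hf2 hb2 h hh hf2h)
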